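/- Converse entropy bound (information core of Theorem 3, bound (27)): let X, Y, C, W be finite-valued random variables on a common probability space such that W is independent of the pair (X, Y), I[C:X] = 0, and H[Y | (C, W)] = 0. Then for every x with μ(X = x) > 0, H[C] ≥ H[Y | X ← x]; in particular H[C] ≥ max over such x of H[Y | X ← x]. -/

import Mathlib

open MeasureTheory ProbabilityTheory Real

noncomputable section

variable {Ω : Type*} [MeasurableSpace Ω]

/-- Shannon entropy (natural logarithm) of a finite-valued random variable `Z` under `μ`. -/
def ent {S : Type*} [Fintype S] (μ : Measure Ω) (Z : Ω → S) : ℝ :=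
  ∑ z : S, Real.negMulLog (μ (Z ⁻¹' {z})).toReal

/-- Conditional entropy `H[Z₁ | Z₂] = H[(Z₁,Z₂)] - H[Z₂]`. -/
def condEnt {S T : Type*} [Fintype S] [Fintype T] (μ : Measure Ω)
    (Z₁ : Ω → S) (Z₂ : Ω → T) : ℝ :=
  ent μ (fun ω => (Z₁ ω, Z₂ ω)) - ent μ Z₂

/-- Mutual information `I[Z₁ : Z₂] = H[Z₁] + H[Z₂] - H[(Z₁,Z₂)]`. -/
def mutInfo {S T : Type*} [Fintype S] [Fintype T] (μ : Measure Ω)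
    (Z₁ : Ω → S) (Z₂ : Ω → T) : ℝ :=
  ent μ Z₁ + ent μ Z₂ - ent μ (fun ω => (Z₁ ω, Z₂ ω))

/-- Conditional mutual information
`I[Z₁ : Z₂ | Z₃] = H[(Z₁,Z₃)] + H[(Z₂,Z₃)] - H[(Z₁,Z₂,Z₃)] - H[Z₃]`. -/
def condMutInfo {S T R : Type*} [Fintype S] [Fintype T] [Fintype R] (μ : Measure Ω)
    (Z₁ : Ω → S) (Z₂ : Ω → T) (Z₃ : Ω → R) : ℝ :=
  ent μ (fun ω => (Z₁ ω, Z₃ ω)) + ent μ (fun ω => (Z₂ ω, Z₃ ω))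
    - ent μ (fun ω => (Z₁ ω, Z₂ ω, Z₃ ω)) - ent μ Z₃

set_option linter.unusedSectionVars false

namespace ConverseAux

variable {μ : Measure Ω}

lemma negMulLog_add_le {a b : ℝ} (ha : 0 ≤ a) (hb : 0 ≤ b) :
    Real.negMulLog (a + b) ≤ Real.negMulLog a + Real.negMulLog b := by
  rcases ha.eq_or_lt with rfl | ha'
  · simp
  rcases hb.eq_or_lt with rfl | hb'
  · simp
  have h1 : Real.log a ≤ Real.log (a + b) := Real.log_le_log ha' (by linarith)
  have h2 : Real.log b ≤ Real.log (a + b) := Real.log_le_log hb' (by linarith)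
  simp only [Real.negMulLog, neg_mul]
  nlinarith

lemma negMulLog_sum_le {ι : Type*} (s : Finset ι) (f : ι → ℝ) (hf : ∀ i ∈ s, 0 ≤ f i) :
    Real.negMulLog (∑ i ∈ s, f i) ≤ ∑ i ∈ s, Real.negMulLog (f i) := by
  classical
  induction s using Finset.cons_induction with
  | empty => simp
  | cons i s hi ih =>
    rw [Finset.sum_cons, Finset.sum_cons]
    have h1 : Real.negMulLog (f i + ∑ j ∈ s, f j)
        ≤ Real.negMulLog (f i) + Real.negMulLog (∑ j ∈ s, f j) :=
      negMulLog_add_le (hf i (Finset.mem_cons_self _ _))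
        (Finset.sum_nonneg fun j hj => hf j (Finset.mem_cons_of_mem hj))
    have h2 := ih (fun j hj => hf j (Finset.mem_cons_of_mem hj))
    linarith

lemma gibbs_term {p q : ℝ} (hp : 0 ≤ p) (hq : 0 ≤ q) (hpq : 0 < p → 0 < q) :
    p - q ≤ p * (Real.log p - Real.log q) := by
  rcases hp.eq_or_lt with rfl | hp'
  · simpa using hq
  · have hq' : 0 < q := hpq hp'
    have h := Real.log_le_sub_one_of_pos (div_pos hq' hp')
    rw [Real.log_div hq'.ne' hp'.ne'] at h
    have := mul_le_mul_of_nonneg_left h hp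
    rw [mul_sub] at this
    have hd : p * (q / p) = q := by field_simp
    nlinarith

lemma gibbs_term_eq {p q : ℝ} (hp : 0 ≤ p) (hq : 0 ≤ q) (hpq : 0 < p → 0 < q)
    (h : p * (Real.log p - Real.log q) = p - q) : p = q := by
  rcases hp.eq_or_lt with rfl | hp'
  · simp at h; linarith
  · have hq' : 0 < q := hpq hp'
    by_contra hne
    have hx : q / p ≠ 1 := by
      intro hh; apply hne; field_simp at hh; linarith
    have hlt := Real.log_lt_sub_one_of_pos (div_pos hq' hp') hx
    rw [Real.log_div hq'.ne' hp'.ne'] at hlt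
    have := mul_lt_mul_of_pos_left hlt hp'
    rw [mul_sub] at this
    have hd : p * (q / p) = q := by field_simp
    nlinarith


lemma pair_preimage {S T : Type*} (f : Ω → S) (g : Ω → T) (a : S) (b : T) :
    (fun ω => (f ω, g ω)) ⁻¹' {(a, b)} = f ⁻¹' {a} ∩ g ⁻¹' {b} := by
  ext ω; simp [Prod.ext_iff]

lemma triple_preimage {S T R : Type*} (f : Ω → S) (g : Ω → T) (h : Ω → R)
    (a : S) (b : T) (c : R) :
    (fun ω => (f ω, g ω, h ω)) ⁻¹' {(a, b, c)} = f ⁻¹' {a} ∩ (g ⁻¹' {b} ∩ h ⁻¹' {c}) := by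
  ext ω; simp [Prod.ext_iff, and_assoc]

lemma sum_pr {S : Type*} [Fintype S] [MeasurableSpace S] [MeasurableSingletonClass S]
    [IsProbabilityMeasure μ] {Z : Ω → S} (hZ : Measurable Z) :
    ∑ s : S, (μ (Z ⁻¹' {s})).toReal = 1 := by
  rw [← ENNReal.toReal_sum (fun a _ => measure_ne_top μ _)]
  rw [sum_measure_preimage_singleton Finset.univ
    (fun s _ => hZ (measurableSet_singleton s))]
  simp

lemma measure_split {T : Type*} [Fintype T] [MeasurableSpace T] [MeasurableSingletonClass T]
    {Z : Ω → T} (hZ : Measurable Z) {A : Set Ω} (hA : MeasurableSet A) :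
    μ A = ∑ t : T, μ (A ∩ Z ⁻¹' {t}) := by
  have hU : A = ⋃ t : T, A ∩ Z ⁻¹' {t} := by
    ext ω; simp
  have hdisj : Pairwise (Function.onFun Disjoint fun t : T => A ∩ Z ⁻¹' {t}) := by
    intro i j hij
    simp only [Function.onFun, Set.disjoint_left]
    rintro ω ⟨-, h1⟩ ⟨-, h2⟩
    simp only [Set.mem_preimage, Set.mem_singleton_iff] at h1 h2
    exact hij (h1 ▸ h2 ▸ rfl)
  conv_lhs => rw [hU]
  rw [measure_iUnion hdisj (fun t => hA.inter (hZ (measurableSet_singleton t)))]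
  exact tsum_fintype _

lemma measure_split_toReal [IsFiniteMeasure μ] {T : Type*} [Fintype T] [MeasurableSpace T]
    [MeasurableSingletonClass T]
    {Z : Ω → T} (hZ : Measurable Z) {A : Set Ω} (hA : MeasurableSet A) :
    (μ A).toReal = ∑ t : T, (μ (A ∩ Z ⁻¹' {t})).toReal := by
  rw [← ENNReal.toReal_sum (fun a _ => measure_ne_top μ _), ← measure_split hZ hA]


section Info

variable {S T : Type*} [Fintype S] [MeasurableSpace S] [MeasurableSingletonClass S]
  [Fintype T] [MeasurableSpace T] [MeasurableSingletonClass T]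
  [IsProbabilityMeasure μ] {Z₁ : Ω → S} {Z₂ : Ω → T}

lemma ent_pair_eq (h1 : Measurable Z₁) (h2 : Measurable Z₂) :
    ent μ (fun ω => (Z₁ ω, Z₂ ω)) =
      ∑ s : S, ∑ t : T, Real.negMulLog (μ (Z₁ ⁻¹' {s} ∩ Z₂ ⁻¹' {t})).toReal := by
  rw [ent, Fintype.sum_prod_type]
  refine Finset.sum_congr rfl fun s _ => Finset.sum_congr rfl fun t _ => ?_
  rw [pair_preimage]

lemma mutInfo_eq_sum (h1 : Measurable Z₁) (h2 : Measurable Z₂) :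
    mutInfo μ Z₁ Z₂ = ∑ s : S, ∑ t : T,
      (μ (Z₁ ⁻¹' {s} ∩ Z₂ ⁻¹' {t})).toReal *
        (Real.log (μ (Z₁ ⁻¹' {s} ∩ Z₂ ⁻¹' {t})).toReal
          - Real.log (μ (Z₁ ⁻¹' {s})).toReal - Real.log (μ (Z₂ ⁻¹' {t})).toReal) := by
  have e1 : ent μ Z₁ = ∑ s : S, ∑ t : T,
      (μ (Z₁ ⁻¹' {s} ∩ Z₂ ⁻¹' {t})).toReal * (- Real.log (μ (Z₁ ⁻¹' {s})).toReal) := by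
    rw [ent]
    refine Finset.sum_congr rfl fun s _ => ?_
    rw [← Finset.sum_mul, ← measure_split_toReal h2 (h1 (measurableSet_singleton s)),
      Real.negMulLog]
    ring
  have e2 : ent μ Z₂ = ∑ s : S, ∑ t : T,
      (μ (Z₁ ⁻¹' {s} ∩ Z₂ ⁻¹' {t})).toReal * (- Real.log (μ (Z₂ ⁻¹' {t})).toReal) := by
    rw [ent, Finset.sum_comm]
    refine Finset.sum_congr rfl fun t _ => ?_
    have : ∀ s : S, Z₁ ⁻¹' {s} ∩ Z₂ ⁻¹' {t} = Z₂ ⁻¹' {t} ∩ Z₁ ⁻¹' {s} := fun s =>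
      Set.inter_comm _ _
    simp_rw [this]
    rw [← Finset.sum_mul, ← measure_split_toReal h1 (h2 (measurableSet_singleton t)),
      Real.negMulLog]
    ring
  rw [mutInfo, e1, e2, ent_pair_eq h1 h2, ← Finset.sum_add_distrib, ← Finset.sum_sub_distrib]
  refine Finset.sum_congr rfl fun s _ => ?_
  rw [← Finset.sum_add_distrib, ← Finset.sum_sub_distrib]
  refine Finset.sum_congr rfl fun t _ => ?_
  rw [Real.negMulLog]
  ring

lemma sum_sum_pr_pair (h1 : Measurable Z₁) (h2 : Measurable Z₂) :
    ∑ s : S, ∑ t : T, (μ (Z₁ ⁻¹' {s} ∩ Z₂ ⁻¹' {t})).toReal = 1 := by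
  have := sum_pr (μ := μ) h1
  rw [← this]
  refine Finset.sum_congr rfl fun s _ => ?_
  exact (measure_split_toReal h2 (h1 (measurableSet_singleton s))).symm

lemma gibbs_bound (h1 : Measurable Z₁) (h2 : Measurable Z₂) (s : S) (t : T) :
    (μ (Z₁ ⁻¹' {s} ∩ Z₂ ⁻¹' {t})).toReal - (μ (Z₁ ⁻¹' {s})).toReal * (μ (Z₂ ⁻¹' {t})).toReal
    ≤ (μ (Z₁ ⁻¹' {s} ∩ Z₂ ⁻¹' {t})).toReal *
        (Real.log (μ (Z₁ ⁻¹' {s} ∩ Z₂ ⁻¹' {t})).toReal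
          - Real.log (μ (Z₁ ⁻¹' {s})).toReal - Real.log (μ (Z₂ ⁻¹' {t})).toReal) := by
  have hple1 : (μ (Z₁ ⁻¹' {s} ∩ Z₂ ⁻¹' {t})).toReal ≤ (μ (Z₁ ⁻¹' {s})).toReal :=
    ENNReal.toReal_mono (measure_ne_top μ _) (measure_mono Set.inter_subset_left)
  have hple2 : (μ (Z₁ ⁻¹' {s} ∩ Z₂ ⁻¹' {t})).toReal ≤ (μ (Z₂ ⁻¹' {t})).toReal :=
    ENNReal.toReal_mono (measure_ne_top μ _) (measure_mono Set.inter_subset_right)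
  have key := gibbs_term (p := (μ (Z₁ ⁻¹' {s} ∩ Z₂ ⁻¹' {t})).toReal)
    (q := (μ (Z₁ ⁻¹' {s})).toReal * (μ (Z₂ ⁻¹' {t})).toReal)
    ENNReal.toReal_nonneg (mul_nonneg ENNReal.toReal_nonneg ENNReal.toReal_nonneg)
    (fun hp => mul_pos (lt_of_lt_of_le hp hple1) (lt_of_lt_of_le hp hple2))
  rcases (ENNReal.toReal_nonneg (a := μ (Z₁ ⁻¹' {s} ∩ Z₂ ⁻¹' {t}))).eq_or_lt with hz | hz
  · rw [← hz]; simp [← hz] at key ⊢; nlinarith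
  · have hq1 : 0 < (μ (Z₁ ⁻¹' {s})).toReal := lt_of_lt_of_le hz hple1
    have hq2 : 0 < (μ (Z₂ ⁻¹' {t})).toReal := lt_of_lt_of_le hz hple2
    rw [Real.log_mul hq1.ne' hq2.ne'] at key
    linarith

lemma sum_diff_zero (h1 : Measurable Z₁) (h2 : Measurable Z₂) :
    ∑ s : S, ∑ t : T, ((μ (Z₁ ⁻¹' {s} ∩ Z₂ ⁻¹' {t})).toReal
      - (μ (Z₁ ⁻¹' {s})).toReal * (μ (Z₂ ⁻¹' {t})).toReal) = 0 := by
  simp_rw [Finset.sum_sub_distrib]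
  rw [sum_sum_pr_pair h1 h2]
  simp_rw [← Finset.mul_sum]
  rw [← Finset.sum_mul, sum_pr h1, sum_pr h2]
  norm_num

lemma mutInfo_nonneg (h1 : Measurable Z₁) (h2 : Measurable Z₂) :
    0 ≤ mutInfo μ Z₁ Z₂ := by
  rw [mutInfo_eq_sum h1 h2]
  calc (0 : ℝ) = ∑ s : S, ∑ t : T, ((μ (Z₁ ⁻¹' {s} ∩ Z₂ ⁻¹' {t})).toReal
      - (μ (Z₁ ⁻¹' {s})).toReal * (μ (Z₂ ⁻¹' {t})).toReal) := (sum_diff_zero h1 h2).symm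
    _ ≤ _ := Finset.sum_le_sum fun s _ => Finset.sum_le_sum fun t _ => gibbs_bound h1 h2 s t

lemma indep_of_mutInfo_eq_zero (h1 : Measurable Z₁) (h2 : Measurable Z₂)
    (h : mutInfo μ Z₁ Z₂ = 0) :
    ∀ s t, (μ (Z₁ ⁻¹' {s} ∩ Z₂ ⁻¹' {t})).toReal
      = (μ (Z₁ ⁻¹' {s})).toReal * (μ (Z₂ ⁻¹' {t})).toReal := by
  classical
  set F : S × T → ℝ := fun p =>
    (μ (Z₁ ⁻¹' {p.1} ∩ Z₂ ⁻¹' {p.2})).toReal *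
      (Real.log (μ (Z₁ ⁻¹' {p.1} ∩ Z₂ ⁻¹' {p.2})).toReal
        - Real.log (μ (Z₁ ⁻¹' {p.1})).toReal - Real.log (μ (Z₂ ⁻¹' {p.2})).toReal)
      - ((μ (Z₁ ⁻¹' {p.1} ∩ Z₂ ⁻¹' {p.2})).toReal
        - (μ (Z₁ ⁻¹' {p.1})).toReal * (μ (Z₂ ⁻¹' {p.2})).toReal) with hF
  have hFsum : ∑ p : S × T, F p = 0 := by
    have e : ∑ p : S × T, F p = mutInfo μ Z₁ Z₂ - ∑ s : S, ∑ t : T,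
        ((μ (Z₁ ⁻¹' {s} ∩ Z₂ ⁻¹' {t})).toReal
          - (μ (Z₁ ⁻¹' {s})).toReal * (μ (Z₂ ⁻¹' {t})).toReal) := by
      rw [mutInfo_eq_sum h1 h2, ← Finset.sum_sub_distrib, Fintype.sum_prod_type]
      refine Finset.sum_congr rfl fun s _ => ?_
      rw [← Finset.sum_sub_distrib]
    rw [e, h, sum_diff_zero h1 h2, sub_zero]
  have hFnonneg : ∀ p : S × T, 0 ≤ F p := fun p => sub_nonneg.mpr (gibbs_bound h1 h2 p.1 p.2)
  have hFzero : ∀ p : S × T, F p = 0 := by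
    intro p
    have := (Finset.sum_eq_zero_iff_of_nonneg (fun p _ => hFnonneg p)).mp hFsum
    exact this p (Finset.mem_univ p)
  intro s t
  have hple1 : (μ (Z₁ ⁻¹' {s} ∩ Z₂ ⁻¹' {t})).toReal ≤ (μ (Z₁ ⁻¹' {s})).toReal :=
    ENNReal.toReal_mono (measure_ne_top μ _) (measure_mono Set.inter_subset_left)
  have hple2 : (μ (Z₁ ⁻¹' {s} ∩ Z₂ ⁻¹' {t})).toReal ≤ (μ (Z₂ ⁻¹' {t})).toReal :=
    ENNReal.toReal_mono (measure_ne_top μ _) (measure_mono Set.inter_subset_right)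
  have hz := hFzero (s, t)
  simp only [hF] at hz
  have heq : (μ (Z₁ ⁻¹' {s} ∩ Z₂ ⁻¹' {t})).toReal *
      (Real.log (μ (Z₁ ⁻¹' {s} ∩ Z₂ ⁻¹' {t})).toReal
        - Real.log ((μ (Z₁ ⁻¹' {s})).toReal * (μ (Z₂ ⁻¹' {t})).toReal))
      = (μ (Z₁ ⁻¹' {s} ∩ Z₂ ⁻¹' {t})).toReal
        - (μ (Z₁ ⁻¹' {s})).toReal * (μ (Z₂ ⁻¹' {t})).toReal := by
    rcases (ENNReal.toReal_nonneg (a := μ (Z₁ ⁻¹' {s} ∩ Z₂ ⁻¹' {t}))).eq_or_lt with h0 | h0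
    · rw [← h0] at hz ⊢; simpa using hz
    · have hq1 : 0 < (μ (Z₁ ⁻¹' {s})).toReal := lt_of_lt_of_le h0 hple1
      have hq2 : 0 < (μ (Z₂ ⁻¹' {t})).toReal := lt_of_lt_of_le h0 hple2
      rw [Real.log_mul hq1.ne' hq2.ne']
      linarith
  exact gibbs_term_eq ENNReal.toReal_nonneg
    (mul_nonneg ENNReal.toReal_nonneg ENNReal.toReal_nonneg)
    (fun hp => mul_pos (lt_of_lt_of_le hp hple1) (lt_of_lt_of_le hp hple2)) heq

lemma det_of_condEnt_eq_zero (h1 : Measurable Z₁) (h2 : Measurable Z₂)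
    (h : condEnt μ Z₁ Z₂ = 0) :
    ∀ s t, (μ (Z₁ ⁻¹' {s} ∩ Z₂ ⁻¹' {t})).toReal = 0 ∨
      (μ (Z₁ ⁻¹' {s} ∩ Z₂ ⁻¹' {t})).toReal = (μ (Z₂ ⁻¹' {t})).toReal := by
  classical
  have e2 : ent μ Z₂ = ∑ s : S, ∑ t : T,
      (μ (Z₁ ⁻¹' {s} ∩ Z₂ ⁻¹' {t})).toReal * (- Real.log (μ (Z₂ ⁻¹' {t})).toReal) := by
    rw [ent, Finset.sum_comm]
    refine Finset.sum_congr rfl fun t _ => ?_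
    have hc : ∀ s : S, Z₁ ⁻¹' {s} ∩ Z₂ ⁻¹' {t} = Z₂ ⁻¹' {t} ∩ Z₁ ⁻¹' {s} := fun s =>
      Set.inter_comm _ _
    simp_rw [hc]
    rw [← Finset.sum_mul, ← measure_split_toReal h1 (h2 (measurableSet_singleton t)),
      Real.negMulLog]
    ring
  have hce : condEnt μ Z₁ Z₂ = ∑ s : S, ∑ t : T,
      (μ (Z₁ ⁻¹' {s} ∩ Z₂ ⁻¹' {t})).toReal *
        (Real.log (μ (Z₂ ⁻¹' {t})).toReal - Real.log (μ (Z₁ ⁻¹' {s} ∩ Z₂ ⁻¹' {t})).toReal) := by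
    rw [condEnt, e2, ent_pair_eq h1 h2, ← Finset.sum_sub_distrib]
    refine Finset.sum_congr rfl fun s _ => ?_
    rw [← Finset.sum_sub_distrib]
    refine Finset.sum_congr rfl fun t _ => ?_
    rw [Real.negMulLog]; ring
  set F : S × T → ℝ := fun p =>
    (μ (Z₁ ⁻¹' {p.1} ∩ Z₂ ⁻¹' {p.2})).toReal *
      (Real.log (μ (Z₂ ⁻¹' {p.2})).toReal
        - Real.log (μ (Z₁ ⁻¹' {p.1} ∩ Z₂ ⁻¹' {p.2})).toReal) with hF
  have hFnonneg : ∀ p : S × T, 0 ≤ F p := by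
    intro p
    show 0 ≤ (μ (Z₁ ⁻¹' {p.1} ∩ Z₂ ⁻¹' {p.2})).toReal *
      (Real.log (μ (Z₂ ⁻¹' {p.2})).toReal
        - Real.log (μ (Z₁ ⁻¹' {p.1} ∩ Z₂ ⁻¹' {p.2})).toReal)
    rcases (ENNReal.toReal_nonneg (a := μ (Z₁ ⁻¹' {p.1} ∩ Z₂ ⁻¹' {p.2}))).eq_or_lt with h0 | h0
    · rw [← h0]; simp
    · have hple : (μ (Z₁ ⁻¹' {p.1} ∩ Z₂ ⁻¹' {p.2})).toReal ≤ (μ (Z₂ ⁻¹' {p.2})).toReal :=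
        ENNReal.toReal_mono (measure_ne_top μ _) (measure_mono Set.inter_subset_right)
      have := Real.log_le_log h0 hple
      exact mul_nonneg h0.le (by linarith)
  have hFsum : ∑ p : S × T, F p = 0 := by
    rw [Fintype.sum_prod_type, ← hce, h]
  have hFzero := (Finset.sum_eq_zero_iff_of_nonneg (fun p _ => hFnonneg p)).mp hFsum
  intro s t
  have hz := hFzero (s, t) (Finset.mem_univ _)
  simp only [hF] at hz
  rcases mul_eq_zero.mp hz with h0 | h0
  · exact Or.inl h0
  · rcases (ENNReal.toReal_nonneg (a := μ (Z₁ ⁻¹' {s} ∩ Z₂ ⁻¹' {t}))).eq_or_lt with hp0 | hp0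
    · exact Or.inl hp0.symm
    · right
      have hple : (μ (Z₁ ⁻¹' {s} ∩ Z₂ ⁻¹' {t})).toReal ≤ (μ (Z₂ ⁻¹' {t})).toReal :=
        ENNReal.toReal_mono (measure_ne_top μ _) (measure_mono Set.inter_subset_right)
      have hq0 : 0 < (μ (Z₂ ⁻¹' {t})).toReal := lt_of_lt_of_le hp0 hple
      have hlog : Real.log (μ (Z₂ ⁻¹' {t})).toReal
          = Real.log (μ (Z₁ ⁻¹' {s} ∩ Z₂ ⁻¹' {t})).toReal := by linarith
      have := Real.exp_log hp0
      rw [← hlog, Real.exp_log hq0] at this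
      linarith

end Info

section Key

variable {𝒴 𝒞 𝒲 : Type*}
  [Fintype 𝒴] [MeasurableSpace 𝒴] [MeasurableSingletonClass 𝒴]
  [Fintype 𝒞] [MeasurableSpace 𝒞] [MeasurableSingletonClass 𝒞]
  [Fintype 𝒲] [MeasurableSpace 𝒲] [MeasurableSingletonClass 𝒲]

lemma key (ν : Measure Ω) [IsProbabilityMeasure ν]
    {Y : Ω → 𝒴} {C : Ω → 𝒞} {W : Ω → 𝒲}
    (hY : Measurable Y) (hC : Measurable C) (hW : Measurable W)
    (hind : ∀ y w, (ν (Y ⁻¹' {y} ∩ W ⁻¹' {w})).toReal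
        = (ν (Y ⁻¹' {y})).toReal * (ν (W ⁻¹' {w})).toReal)
    (hdet : ∀ y c w, (ν (Y ⁻¹' {y} ∩ (C ⁻¹' {c} ∩ W ⁻¹' {w}))).toReal = 0 ∨
        (ν (Y ⁻¹' {y} ∩ (C ⁻¹' {c} ∩ W ⁻¹' {w}))).toReal
          = (ν (C ⁻¹' {c} ∩ W ⁻¹' {w})).toReal) :
    ent ν Y ≤ ent ν C := by
  classical
  -- Step a : ent ν (Y, W) = ent ν Y + ent ν W
  have stepA : ent ν (fun ω => (Y ω, W ω)) = ent ν Y + ent ν W := by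
    rw [ent_pair_eq hY hW]
    have : ∀ y : 𝒴, ∑ w : 𝒲, Real.negMulLog (ν (Y ⁻¹' {y} ∩ W ⁻¹' {w})).toReal
        = Real.negMulLog (ν (Y ⁻¹' {y})).toReal
          + (ν (Y ⁻¹' {y})).toReal * ∑ w : 𝒲, Real.negMulLog (ν (W ⁻¹' {w})).toReal := by
      intro y
      have e : ∀ w : 𝒲, Real.negMulLog (ν (Y ⁻¹' {y} ∩ W ⁻¹' {w})).toReal
          = (ν (W ⁻¹' {w})).toReal * Real.negMulLog (ν (Y ⁻¹' {y})).toReal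
            + (ν (Y ⁻¹' {y})).toReal * Real.negMulLog (ν (W ⁻¹' {w})).toReal := by
        intro w
        rw [hind y w, Real.negMulLog_mul]
      rw [Finset.sum_congr rfl fun w _ => e w, Finset.sum_add_distrib,
        ← Finset.sum_mul, sum_pr hW, one_mul, ← Finset.mul_sum]
    rw [Finset.sum_congr rfl fun y _ => this y, Finset.sum_add_distrib,
      ← Finset.sum_mul, ← ent, sum_pr hY, one_mul, ← ent]
  -- Step b : ent ν (Y, W) ≤ ent ν (Y, C, W)
  have hmYW : ∀ (y : 𝒴) (w : 𝒲), (ν (Y ⁻¹' {y} ∩ W ⁻¹' {w})).toReal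
      = ∑ c : 𝒞, (ν (Y ⁻¹' {y} ∩ (C ⁻¹' {c} ∩ W ⁻¹' {w}))).toReal := by
    intro y w
    rw [measure_split_toReal hC
      ((hY (measurableSet_singleton y)).inter (hW (measurableSet_singleton w)))]
    refine Finset.sum_congr rfl fun c _ => ?_
    congr 2
    ext ω
    simp only [Set.mem_inter_iff, Set.mem_preimage, Set.mem_singleton_iff]
    tauto
  have eTriple : ent ν (fun ω => (Y ω, C ω, W ω))
      = ∑ y : 𝒴, ∑ c : 𝒞, ∑ w : 𝒲,
          Real.negMulLog (ν (Y ⁻¹' {y} ∩ (C ⁻¹' {c} ∩ W ⁻¹' {w}))).toReal := by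
    rw [ent, Fintype.sum_prod_type]
    refine Finset.sum_congr rfl fun y _ => ?_
    rw [Fintype.sum_prod_type]
    refine Finset.sum_congr rfl fun c _ => Finset.sum_congr rfl fun w _ => ?_
    rw [triple_preimage]
  have stepB : ent ν (fun ω => (Y ω, W ω)) ≤ ent ν (fun ω => (Y ω, C ω, W ω)) := by
    rw [ent_pair_eq hY hW, eTriple]
    refine Finset.sum_le_sum fun y _ => ?_
    rw [Finset.sum_comm]
    refine Finset.sum_le_sum fun w _ => ?_
    rw [hmYW y w]
    exact negMulLog_sum_le _ _ (fun c _ => ENNReal.toReal_nonneg)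
  -- Step c : ent ν (Y, C, W) = ent ν (C, W)
  have hmCW : ∀ (c : 𝒞) (w : 𝒲), (ν (C ⁻¹' {c} ∩ W ⁻¹' {w})).toReal
      = ∑ y : 𝒴, (ν (Y ⁻¹' {y} ∩ (C ⁻¹' {c} ∩ W ⁻¹' {w}))).toReal := by
    intro c w
    rw [measure_split_toReal hY
      ((hC (measurableSet_singleton c)).inter (hW (measurableSet_singleton w)))]
    refine Finset.sum_congr rfl fun y _ => ?_
    congr 2
    ext ω
    simp only [Set.mem_inter_iff, Set.mem_preimage, Set.mem_singleton_iff]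
    tauto
  have stepC : ent ν (fun ω => (Y ω, C ω, W ω)) = ent ν (fun ω => (C ω, W ω)) := by
    rw [eTriple, ent_pair_eq hC hW, Finset.sum_comm]
    refine Finset.sum_congr rfl fun c _ => ?_
    rw [Finset.sum_comm]
    refine Finset.sum_congr rfl fun w _ => ?_
    by_cases hcw : (ν (C ⁻¹' {c} ∩ W ⁻¹' {w})).toReal = 0
    · have hall : ∀ y : 𝒴, (ν (Y ⁻¹' {y} ∩ (C ⁻¹' {c} ∩ W ⁻¹' {w}))).toReal = 0 := by
        have hs := (hmCW c w).symm
        rw [hcw] at hs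
        intro y
        exact le_antisymm (by
          have := Finset.single_le_sum (f := fun y : 𝒴 =>
            (ν (Y ⁻¹' {y} ∩ (C ⁻¹' {c} ∩ W ⁻¹' {w}))).toReal)
            (fun i _ => ENNReal.toReal_nonneg) (Finset.mem_univ y)
          linarith [hs ▸ this]) ENNReal.toReal_nonneg
      simp only [hall, hcw, Real.negMulLog_zero, Finset.sum_const, smul_zero]
    · have e : ∀ y : 𝒴, Real.negMulLog (ν (Y ⁻¹' {y} ∩ (C ⁻¹' {c} ∩ W ⁻¹' {w}))).toReal
          = ((ν (Y ⁻¹' {y} ∩ (C ⁻¹' {c} ∩ W ⁻¹' {w}))).toReal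
              / (ν (C ⁻¹' {c} ∩ W ⁻¹' {w})).toReal)
            * Real.negMulLog (ν (C ⁻¹' {c} ∩ W ⁻¹' {w})).toReal := by
        intro y
        rcases hdet y c w with h0 | he
        · rw [h0]; simp
        · rw [he]; field_simp
      rw [Finset.sum_congr rfl fun y _ => e y, ← Finset.sum_mul, ← Finset.sum_div,
        ← hmCW c w, div_self hcw, one_mul]
  -- Step d : subadditivity
  have stepD : ent ν (fun ω => (C ω, W ω)) ≤ ent ν C + ent ν W := by
    have := mutInfo_nonneg (μ := ν) hC hW
    rw [mutInfo] at this
    linarith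
  linarith

end Key

end ConverseAux

/-- Converse entropy bound (information core of Theorem 3, bound (27)). -/
theorem converse_entropy_bound
    {𝒳 𝒴 𝒞 𝒲 : Type*}
    [Fintype 𝒳] [Nonempty 𝒳] [MeasurableSpace 𝒳] [MeasurableSingletonClass 𝒳]
    [Fintype 𝒴] [Nonempty 𝒴] [MeasurableSpace 𝒴] [MeasurableSingletonClass 𝒴]
    [Fintype 𝒞] [Nonempty 𝒞] [MeasurableSpace 𝒞] [MeasurableSingletonClass 𝒞]
    [Fintype 𝒲] [Nonempty 𝒲] [MeasurableSpace 𝒲] [MeasurableSingletonClass 𝒲]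
    (μ : Measure Ω) [IsProbabilityMeasure μ]
    (X : Ω → 𝒳) (Y : Ω → 𝒴) (C : Ω → 𝒞) (W : Ω → 𝒲)
    (hX : Measurable X) (hY : Measurable Y) (hC : Measurable C) (hW : Measurable W)
    (hWindep : IndepFun W (fun ω => (X ω, Y ω)) μ)
    (hCX : mutInfo μ C X = 0)
    (hdec : condEnt μ Y (fun ω => (C ω, W ω)) = 0) :
    ∀ x : 𝒳, 0 < μ (X ⁻¹' {x}) → ent μ C ≥ ent (μ[|X ⁻¹' {x}]) Y := by
  intro x hx
  classical
  have hs : MeasurableSet (X ⁻¹' {x}) := hX (measurableSet_singleton x)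
  have hμs0 : μ (X ⁻¹' {x}) ≠ 0 := hx.ne'
  haveI : IsProbabilityMeasure (μ[|X ⁻¹' {x}]) := cond_isProbabilityMeasure hμs0
  set r : ℝ := (μ (X ⁻¹' {x})).toReal with hrdef
  have hr : 0 < r := ENNReal.toReal_pos hμs0 (measure_ne_top μ _)
  have hcond : ∀ A : Set Ω, ((μ[|X ⁻¹' {x}]) A).toReal = r⁻¹ * (μ (X ⁻¹' {x} ∩ A)).toReal := by
    intro A
    rw [cond_apply hs, ENNReal.toReal_mul, ENNReal.toReal_inv]
  -- pointwise independence of C and X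
  have hCXpt := ConverseAux.indep_of_mutInfo_eq_zero hC hX hCX
  -- pointwise determinism
  have hdetpt := ConverseAux.det_of_condEnt_eq_zero hY (hC.prodMk hW) hdec
  -- independence facts from hWindep
  have hWXY : ∀ (w : 𝒲) (x' : 𝒳) (y : 𝒴),
      μ (W ⁻¹' {w} ∩ (X ⁻¹' {x'} ∩ Y ⁻¹' {y}))
        = μ (W ⁻¹' {w}) * μ (X ⁻¹' {x'} ∩ Y ⁻¹' {y}) := by
    intro w x' y
    have := hWindep.measure_inter_preimage_eq_mul (s := {w}) (t := {(x', y)})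
      (measurableSet_singleton w) (measurableSet_singleton (x', y))
    rwa [ConverseAux.pair_preimage X Y x' y] at this
  have hWX : ∀ (w : 𝒲), μ (W ⁻¹' {w} ∩ X ⁻¹' {x})
      = μ (W ⁻¹' {w}) * μ (X ⁻¹' {x}) := by
    intro w
    have hset : (fun ω => (X ω, Y ω)) ⁻¹' ({x} ×ˢ Set.univ) = X ⁻¹' {x} := by
      ext ω; simp [eq_comm]
    have := hWindep.measure_inter_preimage_eq_mul (s := {w}) (t := {x} ×ˢ Set.univ)
      (measurableSet_singleton w) ((measurableSet_singleton x).prod MeasurableSet.univ)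
    rwa [hset] at this
  -- hind for the conditional measure
  have hind : ∀ (y : 𝒴) (w : 𝒲), ((μ[|X ⁻¹' {x}]) (Y ⁻¹' {y} ∩ W ⁻¹' {w})).toReal
      = ((μ[|X ⁻¹' {x}]) (Y ⁻¹' {y})).toReal * ((μ[|X ⁻¹' {x}]) (W ⁻¹' {w})).toReal := by
    intro y w
    rw [hcond, hcond, hcond]
    have e1 : X ⁻¹' {x} ∩ (Y ⁻¹' {y} ∩ W ⁻¹' {w})
        = W ⁻¹' {w} ∩ (X ⁻¹' {x} ∩ Y ⁻¹' {y}) := by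
      ext ω
      simp only [Set.mem_inter_iff, Set.mem_preimage, Set.mem_singleton_iff]
      tauto
    have e2 : X ⁻¹' {x} ∩ W ⁻¹' {w} = W ⁻¹' {w} ∩ X ⁻¹' {x} := Set.inter_comm _ _
    rw [e1, e2, hWXY w x y, hWX w, ENNReal.toReal_mul, ENNReal.toReal_mul, ← hrdef]
    have e3 : (μ (X ⁻¹' {x} ∩ Y ⁻¹' {y})).toReal = (μ (X ⁻¹' {x} ∩ Y ⁻¹' {y})).toReal := rfl
    field_simp
  -- hdet for the conditional measure
  have hdet : ∀ (y : 𝒴) (c : 𝒞) (w : 𝒲),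
      ((μ[|X ⁻¹' {x}]) (Y ⁻¹' {y} ∩ (C ⁻¹' {c} ∩ W ⁻¹' {w}))).toReal = 0 ∨
      ((μ[|X ⁻¹' {x}]) (Y ⁻¹' {y} ∩ (C ⁻¹' {c} ∩ W ⁻¹' {w}))).toReal
        = ((μ[|X ⁻¹' {x}]) (C ⁻¹' {c} ∩ W ⁻¹' {w})).toReal := by
    intro y c w
    have hpre : (fun ω => (C ω, W ω)) ⁻¹' {(c, w)} = C ⁻¹' {c} ∩ W ⁻¹' {w} :=
      ConverseAux.pair_preimage C W c w
    have hd := hdetpt y (c, w)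
    rw [hpre] at hd
    set A : Set Ω := Y ⁻¹' {y} ∩ (C ⁻¹' {c} ∩ W ⁻¹' {w}) with hA
    set B : Set Ω := C ⁻¹' {c} ∩ W ⁻¹' {w} with hB
    have hAm : MeasurableSet A := (hY (measurableSet_singleton y)).inter
      ((hC (measurableSet_singleton c)).inter (hW (measurableSet_singleton w)))
    have hAB : A ⊆ B := Set.inter_subset_right
    rcases hd with h0 | he
    · left
      have hA0 : μ A = 0 := by
        rcases (ENNReal.toReal_eq_zero_iff _).mp h0 with h | h
        · exact h
        · exact absurd h (measure_ne_top μ A)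
      have : μ (X ⁻¹' {x} ∩ A) = 0 :=
        le_antisymm (le_trans (measure_mono Set.inter_subset_right) hA0.le) zero_le
      rw [hcond, this]
      simp
    · right
      have hAB' : μ A = μ B :=
        (ENNReal.toReal_eq_toReal_iff' (measure_ne_top μ A) (measure_ne_top μ B)).mp he
      have hdiff : μ (B \ A) = 0 := by
        rw [measure_diff hAB hAm.nullMeasurableSet (measure_ne_top μ A), hAB']
        simp
      have hle : μ (X ⁻¹' {x} ∩ B) ≤ μ (X ⁻¹' {x} ∩ A) := by
        calc μ (X ⁻¹' {x} ∩ B) ≤ μ ((X ⁻¹' {x} ∩ A) ∪ (B \ A)) := by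
              apply measure_mono
              rintro ω ⟨hω1, hω2⟩
              by_cases hωA : ω ∈ A
              · exact Or.inl ⟨hω1, hωA⟩
              · exact Or.inr ⟨hω2, hωA⟩
          _ ≤ μ (X ⁻¹' {x} ∩ A) + μ (B \ A) := measure_union_le _ _
          _ = μ (X ⁻¹' {x} ∩ A) := by rw [hdiff, add_zero]
      have hge : μ (X ⁻¹' {x} ∩ A) ≤ μ (X ⁻¹' {x} ∩ B) :=
        measure_mono (Set.inter_subset_inter_right _ hAB)
      rw [hcond, hcond, le_antisymm hge hle]
  have hkey := ConverseAux.key (μ[|X ⁻¹' {x}]) hY hC hW hind hdet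
  have hCent : ent (μ[|X ⁻¹' {x}]) C = ent μ C := by
    unfold ent
    refine Finset.sum_congr rfl fun c _ => ?_
    congr 1
    rw [hcond]
    have e : X ⁻¹' {x} ∩ C ⁻¹' {c} = C ⁻¹' {c} ∩ X ⁻¹' {x} := Set.inter_comm _ _
    rw [e, hCXpt c x, ← hrdef]
    field_simp
  rw [ge_iff_le, ← hCent]
  exact hkey
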